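/- arXiv:1909.02920 — 14 statements merged into one kernel-verified Lean document; each statement's English description precedes it below -/
import Mathlib

section
/- If M is an IB-homogeneous graph and g : X → Y is an isomorphism between finite induced subgraphs of M, then the inverse isomorphism g⁻¹ : Y → X extends to an antibimorphism of M (a bijection M → M preserving nonedges). -/
/-- A bimorphism of a graph: a bijective edge-preserving self-map. -/
def IsBimorphism {V : Type*} (G : SimpleGraph V) (F : V → V) : Prop :=
  Function.Bijective F ∧ ∀ u v, G.Adj u v → G.Adj (F u) (F v)

/-- A partial isomorphism of `G` with finite domain `S`. -/
def IsPartialIso {V : Type*} (G : SimpleGraph V) (S : Finset V) (f : V → V) : Prop :=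
  Set.InjOn f S ∧ ∀ u ∈ S, ∀ v ∈ S, (G.Adj u v ↔ G.Adj (f u) (f v))

/-- `G` is IB-homogeneous: every isomorphism between finite induced subgraphs
extends to a bimorphism of `G`. -/
def IBHom {V : Type*} (G : SimpleGraph V) : Prop :=
  ∀ (S : Finset V) (f : V → V), IsPartialIso G S f →
    ∃ F : V → V, IsBimorphism G F ∧ ∀ x ∈ S, F x = f x

/-- `G` represents the monomorphism `m`: some bimorphism maps a nonedge to an edge. -/
def RepM {V : Type*} (G : SimpleGraph V) : Prop :=
  ∃ F : V → V, IsBimorphism G F ∧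
    ∃ u v : V, u ≠ v ∧ ¬ G.Adj u v ∧ G.Adj (F u) (F v)

/-- An independent set: pairwise nonadjacent vertices. -/
def IsIndep {V : Type*} (G : SimpleGraph V) (s : Set V) : Prop :=
  s.Pairwise fun u v => ¬ G.Adj u v

/-- In an IB-homogeneous graph, the inverse of a finite partial isomorphism extends to an
antibimorphism of `M`. -/
theorem stmt2 {V : Type*} (M : SimpleGraph V) (hM : IBHom M)
    (S : Finset V) (f : V → V) (hf : IsPartialIso M S f) :
    ∃ F : V → V, Function.Bijective F ∧
      (∀ u v : V, u ≠ v → ¬ M.Adj u v → ¬ M.Adj (F u) (F v)) ∧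
      ∀ x ∈ S, F (f x) = x := by
  obtain ⟨F, ⟨hFbij, hFadj⟩, hFx⟩ := hM S f hf
  let e := Equiv.ofBijective F hFbij
  refine ⟨e.symm, e.symm.bijective, ?_, ?_⟩
  · intro u v _ hnadj hadj
    have := hFadj _ _ hadj
    simp only [show ∀ w, F (e.symm w) = w from fun w => e.apply_symm_apply w] at this
    exact hnadj this
  · intro x hx
    have : F x = f x := hFx x hx
    rw [← this]
    exact e.symm_apply_apply x
end

section
/- If G is an IB-homogeneous graph, then the complement of G is also IB-homogeneous. -/
/-- The complement of an IB-homogeneous graph is IB-homogeneous. -/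
theorem stmt3 {V : Type*} (G : SimpleGraph V) (hG : IBHom G) : IBHom Gᶜ := by
  classical
  intro S f hf
  cases isEmpty_or_nonempty V with
  | inl h =>
      exact ⟨id, ⟨Function.bijective_id, fun u v h' => h'⟩,
        fun x _ => (h.false x).elim⟩
  | inr h =>
    obtain ⟨hinj, hiff⟩ := hf
    -- inverse partial map of f on S
    set g : V → V := Function.invFunOn f S with hgdef
    have hginv : ∀ x ∈ S, g (f x) = x := fun x hx => hinj.leftInvOn_invFunOn hx
    -- g is a partial iso of G on S.image f
    have hgpi : IsPartialIso G (S.image f) g := by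
      constructor
      · intro a ha b hb hab
        rw [Finset.coe_image] at ha hb
        obtain ⟨x, hx, rfl⟩ := ha
        obtain ⟨y, hy, rfl⟩ := hb
        rw [hginv x hx, hginv y hy] at hab
        rw [hab]
      · intro u hu v hv
        obtain ⟨x, hx, rfl⟩ := Finset.mem_image.mp hu
        obtain ⟨y, hy, rfl⟩ := Finset.mem_image.mp hv
        rw [hginv x hx, hginv y hy]
        -- need : G.Adj (f x) (f y) ↔ G.Adj x y
        have hc := hiff x hx y hy
        by_cases hxy : x = y
        · subst hxy
          simp [SimpleGraph.irrefl]
        · have hfxy : f x ≠ f y := fun e => hxy (hinj hx hy e)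
          have : (x ≠ y ∧ ¬ G.Adj x y) ↔ (f x ≠ f y ∧ ¬ G.Adj (f x) (f y)) := by
            simpa [SimpleGraph.compl_adj] using hc
          tauto
    obtain ⟨H, ⟨Hbij, Hedge⟩, Hext⟩ := hG (S.image f) g hgpi
    let E := Equiv.ofBijective H Hbij
    refine ⟨E.symm, ⟨E.symm.bijective, ?_⟩, ?_⟩
    · intro u v huv
      rw [SimpleGraph.compl_adj] at huv ⊢
      refine ⟨fun e => huv.1 (E.symm.injective.eq_iff.mp e), fun hadj => ?_⟩
      have := Hedge _ _ hadj
      have h1 : H (E.symm u) = u := E.apply_symm_apply u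
      have h2 : H (E.symm v) = v := E.apply_symm_apply v
      rw [h1, h2] at this
      exact huv.2 this
    · intro x hx
      have : E (f x) = x := by
        show H (f x) = x
        rw [Hext (f x) (Finset.mem_image_of_mem f hx), hginv x hx]
      have h2 := congrArg E.symm this
      rw [Equiv.symm_apply_apply] at h2
      exact h2.symm
end

section
/- Let G be an IB-homogeneous graph in which no bimorphism maps a nonedge to an edge. Then every bimorphism of G is an automorphism, and consequently G is ultrahomogeneous: every isomorphism between finite induced subgraphs extends to an automorphism of G. -/
/-- If `G` is IB-homogeneous and no bimorphism maps a nonedge to an edge, then every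
bimorphism of `G` is an automorphism and `G` is ultrahomogeneous. -/
theorem stmt4 {V : Type*} (G : SimpleGraph V) (hG : IBHom G)
    (hm : ∀ F : V → V, IsBimorphism G F →
      ∀ u v : V, u ≠ v → ¬ G.Adj u v → ¬ G.Adj (F u) (F v)) :
    (∀ F : V → V, IsBimorphism G F →
      Function.Bijective F ∧ ∀ u v : V, G.Adj u v ↔ G.Adj (F u) (F v)) ∧
    (∀ (S : Finset V) (f : V → V), IsPartialIso G S f →
      ∃ F : V → V, Function.Bijective F ∧
        (∀ u v : V, G.Adj u v ↔ G.Adj (F u) (F v)) ∧ ∀ x ∈ S, F x = f x) := by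
  have key : ∀ F : V → V, IsBimorphism G F →
      Function.Bijective F ∧ ∀ u v : V, G.Adj u v ↔ G.Adj (F u) (F v) := by
    intro F hF
    refine ⟨hF.1, fun u v => ⟨hF.2 u v, fun h => ?_⟩⟩
    by_contra hne
    rcases eq_or_ne u v with rfl | huv
    · exact G.irrefl h
    · exact hm F hF u v huv hne h
  refine ⟨key, fun S f hf => ?_⟩
  obtain ⟨F, hF, hext⟩ := hG S f hf
  obtain ⟨hb, hiff⟩ := key F hF
  exact ⟨F, hb, hiff, hext⟩
end

section
/- If G is an IB-homogeneous graph with some bimorphism mapping a nonedge to an edge, then the complement of G also has a bimorphism mapping a nonedge to an edge. -/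
/-- If an IB-homogeneous graph represents `m`, then so does its complement. -/
theorem stmt5 {V : Type*} (G : SimpleGraph V) (hG : IBHom G) (hm : RepM G) : RepM Gᶜ := by
  obtain ⟨F, ⟨hFb, hFe⟩, u, v, huv, hnadj, hadj⟩ := hm
  let e := Equiv.ofBijective F hFb
  refine ⟨e.symm, ⟨e.symm.bijective, ?_⟩, F u, F v, hadj.ne, ?_, ?_⟩
  · intro x y hxy
    obtain ⟨hne, hna⟩ := hxy
    refine ⟨fun h => hne (e.symm.injective h), fun h => hna ?_⟩
    have h' := hFe _ _ h
    have hx : F (e.symm x) = x := e.apply_symm_apply x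
    have hy : F (e.symm y) = y := e.apply_symm_apply y
    rwa [show F (e.symm x) = x from hx, show F (e.symm y) = y from hy] at h'
  · simp only [SimpleGraph.compl_adj, not_and, not_not]
    intro _; exact hadj
  · have h1 : e.symm (F u) = u := e.symm_apply_apply u
    have h2 : e.symm (F v) = v := e.symm_apply_apply v
    rw [h1, h2]
    exact ⟨huv, hnadj⟩
end

section
/- Let G be an IB-homogeneous graph that represents m (some bimorphism maps a nonedge to an edge). Then for every finite subset X of G there exists a bimorphism F of G such that the image F(X) is a clique. -/

lemma bimorph_comp {V : Type*} {G : SimpleGraph V} {F F' : V → V}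
    (h : IsBimorphism G F) (h' : IsBimorphism G F') : IsBimorphism G (F' ∘ F) :=
  ⟨h'.1.comp h.1, fun u v huv => h'.2 _ _ (h.2 _ _ huv)⟩

lemma key_lemma {V : Type*} (G : SimpleGraph V) (hG : IBHom G) (hm : RepM G)
    {u v : V} (huv : u ≠ v) (hna : ¬ G.Adj u v) :
    ∃ F : V → V, IsBimorphism G F ∧ G.Adj (F u) (F v) := by
  classical
  obtain ⟨F₀, hF₀, a, b, hab, hnab, hadj⟩ := hm
  set f : V → V := fun x => if x = u then a else b with hf
  have hfu : f u = a := if_pos rfl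
  have hfv : f v = b := if_neg huv.symm
  have hpi : IsPartialIso G {u, v} f := by
    constructor
    · intro x hx y hy hxy
      simp only [Finset.coe_insert, Finset.coe_singleton, Set.mem_insert_iff,
        Set.mem_singleton_iff] at hx hy
      rcases hx with rfl | rfl <;> rcases hy with rfl | rfl <;>
        simp_all [hfu, hfv]
    · intro x hx y hy
      simp only [Finset.mem_insert, Finset.mem_singleton] at hx hy
      rcases hx with rfl | rfl <;> rcases hy with rfl | rfl
      · simp
      · rw [hfu, hfv]; exact iff_of_false hna hnab
      · rw [hfv, hfu]; exact iff_of_false (fun h => hna h.symm) (fun h => hnab h.symm)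
      · simp
  obtain ⟨H, hH, hHext⟩ := hG {u, v} f hpi
  refine ⟨F₀ ∘ H, bimorph_comp hH hF₀, ?_⟩
  have h1 : H u = a := (hHext u (by simp)).trans hfu
  have h2 : H v = b := (hHext v (by simp)).trans hfv
  simpa [h1, h2] using hadj

/-- In an IB-homogeneous graph representing `m`, every finite set is mapped to a clique
by some bimorphism. -/
theorem stmt6 {V : Type*} (G : SimpleGraph V) (hG : IBHom G) (hm : RepM G)
    (X : Finset V) :
    ∃ F : V → V, IsBimorphism G F ∧ G.IsClique (F '' ↑X) := by
  classical
  suffices h : ∀ n (X : Finset V),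
      ((X ×ˢ X).filter fun p => p.1 ≠ p.2 ∧ ¬ G.Adj p.1 p.2).card = n →
      ∃ F : V → V, IsBimorphism G F ∧ G.IsClique (F '' ↑X) from h _ X rfl
  intro n
  induction n using Nat.strong_induction_on with
  | _ n ih =>
    intro X hcard
    by_cases hA : ((X ×ˢ X).filter fun p => p.1 ≠ p.2 ∧ ¬ G.Adj p.1 p.2) = ∅
    · refine ⟨id, ⟨Function.bijective_id, fun u v h => h⟩, ?_⟩
      intro x hx y hy hxy
      simp only [Set.image_id, Finset.mem_coe] at hx hy
      by_contra hadj
      have : (x, y) ∈ ((X ×ˢ X).filter fun p => p.1 ≠ p.2 ∧ ¬ G.Adj p.1 p.2) := by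
        simp [Finset.mem_filter, Finset.mem_product, hx, hy, hxy, hadj]
      rw [hA] at this
      exact absurd this (Finset.notMem_empty _)
    · obtain ⟨⟨u, v⟩, hmem⟩ := Finset.nonempty_iff_ne_empty.mpr hA
      have hmem' := hmem
      simp only [Finset.mem_filter, Finset.mem_product] at hmem'
      obtain ⟨⟨hu, hv⟩, hne, hna⟩ := hmem'
      obtain ⟨F, hF, hFadj⟩ := key_lemma G hG hm hne hna
      set Y := X.image F with hY
      have hsub : ((Y ×ˢ Y).filter fun p => p.1 ≠ p.2 ∧ ¬ G.Adj p.1 p.2) ⊆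
          ((((X ×ˢ X).filter fun p => p.1 ≠ p.2 ∧ ¬ G.Adj p.1 p.2).erase (u, v)).image
            (Prod.map F F)) := by
        rintro ⟨c, d⟩ hcd
        simp only [Finset.mem_filter, Finset.mem_product, hY, Finset.mem_image] at hcd
        obtain ⟨⟨⟨x, hx, rfl⟩, ⟨y, hy, rfl⟩⟩, hne', hnadj⟩ := hcd
        have hxy : x ≠ y := fun h => hne' (by rw [h])
        have hnxy : ¬ G.Adj x y := fun h => hnadj (hF.2 _ _ h)
        have hneq : (x, y) ≠ (u, v) := by
          rintro h
          simp only [Prod.mk.injEq] at h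
          rw [h.1, h.2] at hnadj
          exact hnadj hFadj
        refine Finset.mem_image.mpr ⟨(x, y), Finset.mem_erase.mpr ⟨hneq, ?_⟩, rfl⟩
        simp [Finset.mem_filter, Finset.mem_product, hx, hy, hxy, hnxy]
      have hlt : ((Y ×ˢ Y).filter fun p => p.1 ≠ p.2 ∧ ¬ G.Adj p.1 p.2).card < n := by
        calc ((Y ×ˢ Y).filter fun p => p.1 ≠ p.2 ∧ ¬ G.Adj p.1 p.2).card
            ≤ _ := Finset.card_le_card hsub
          _ ≤ (((X ×ˢ X).filter fun p => p.1 ≠ p.2 ∧ ¬ G.Adj p.1 p.2).erase (u, v)).card :=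
              Finset.card_image_le
          _ < ((X ×ˢ X).filter fun p => p.1 ≠ p.2 ∧ ¬ G.Adj p.1 p.2).card :=
              Finset.card_erase_lt_of_mem hmem
          _ = n := hcard
      obtain ⟨F', hF', hclq⟩ := ih _ hlt Y rfl
      refine ⟨F' ∘ F, bimorph_comp hF hF', ?_⟩
      have : (F' ∘ F) '' ↑X = F' '' ↑Y := by
        rw [hY, Finset.coe_image, Set.image_comp]
      rwa [this]
end

section
/- Let G be an IB-homogeneous graph that represents m (some bimorphism maps a nonedge to an edge). Then for every finite subset X of G there exists a bimorphism F of G whose preimage of X (i.e., F⁻¹(X)) induces an independent set. -/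
section Aux

variable {V : Type*} (G : SimpleGraph V)

lemma bim_id : IsBimorphism G id :=
  ⟨Function.bijective_id, fun _ _ h => h⟩

lemma bim_comp {F F' : V → V} (hF : IsBimorphism G F) (hF' : IsBimorphism G F') :
    IsBimorphism G (F ∘ F') :=
  ⟨hF.1.comp hF'.1, fun u v h => hF.2 _ _ (hF'.2 u v h)⟩

/-- The inverse of a bimorphism of `G` is a bimorphism of the complement. -/
lemma bim_inv [Nonempty V] {F : V → V} (hF : IsBimorphism G F) :
    IsBimorphism Gᶜ (Function.invFun F) := by
  have h1 : Function.LeftInverse (Function.invFun F) F :=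
    Function.leftInverse_invFun hF.1.injective
  have h2 : Function.RightInverse (Function.invFun F) F :=
    Function.rightInverse_invFun hF.1.surjective
  refine ⟨Function.bijective_iff_has_inverse.mpr ⟨F, h2, h1⟩, ?_⟩
  intro u v huv
  rw [SimpleGraph.compl_adj] at huv ⊢
  refine ⟨?_, ?_⟩
  · intro h
    apply huv.1
    rw [← h2 u, ← h2 v, h]
  · intro h
    have := hF.2 _ _ h
    rw [h2 u, h2 v] at this
    exact huv.2 this

open Classical in
/-- A partial inverse of `f` on `S`. -/
noncomputable def pinv (f : V → V) (S : Finset V) : V → V :=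
  fun y => if h : ∃ x ∈ S, f x = y then h.choose else y

lemma pinv_spec {f : V → V} {S : Finset V} (hf : Set.InjOn f S) {x : V} (hx : x ∈ S) :
    pinv f S (f x) = x := by
  have h : ∃ x' ∈ S, f x' = f x := ⟨x, hx, rfl⟩
  rw [pinv, dif_pos h]
  exact hf h.choose_spec.1 hx h.choose_spec.2

/-- The complement of an IB-homogeneous graph is IB-homogeneous. -/
lemma compl_ibhom [Nonempty V] (hG : IBHom G) : IBHom Gᶜ := by
  classical
  intro S f hf
  -- `f` is also a partial isomorphism of `G`
  have hfG : IsPartialIso G S f := by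
    refine ⟨hf.1, fun u hu v hv => ?_⟩
    by_cases huv : u = v
    · subst huv
      exact iff_of_false (G.irrefl) (G.irrefl)
    · have h2 := hf.2 u hu v hv
      rw [SimpleGraph.compl_adj, SimpleGraph.compl_adj] at h2
      have hne : f u ≠ f v := fun h => huv (hf.1 hu hv h)
      constructor
      · intro h
        by_contra hc
        exact (h2.mpr ⟨hne, hc⟩).2 h
      · intro h
        by_contra hc
        exact (h2.mp ⟨huv, hc⟩).2 h
  -- the partial inverse is a partial isomorphism of `G` on the image
  set g := pinv f S with hg
  have hgi : ∀ x ∈ S, g (f x) = x := fun x hx => pinv_spec hf.1 hx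
  have hgpi : IsPartialIso G (S.image f) g := by
    constructor
    · intro y1 hy1 y2 hy2 h
      simp only [Finset.coe_image, Set.mem_image] at hy1 hy2
      obtain ⟨x1, hx1, rfl⟩ := hy1
      obtain ⟨x2, hx2, rfl⟩ := hy2
      rw [hgi x1 hx1, hgi x2 hx2] at h
      rw [h]
    · intro y1 hy1 y2 hy2
      rw [Finset.mem_image] at hy1 hy2
      obtain ⟨x1, hx1, rfl⟩ := hy1
      obtain ⟨x2, hx2, rfl⟩ := hy2
      rw [hgi x1 hx1, hgi x2 hx2]
      exact (hfG.2 x1 hx1 x2 hx2).symm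
  obtain ⟨F, hF, hext⟩ := hG (S.image f) g hgpi
  refine ⟨Function.invFun F, bim_inv G hF, ?_⟩
  intro x hx
  have hFfx : F (f x) = x := by
    rw [hext (f x) (Finset.mem_image_of_mem f hx), hgi x hx]
  have := Function.leftInverse_invFun hF.1.injective (f x)
  rw [hFfx] at this
  exact this

/-- The complement of a graph representing `m` also represents `m`. -/
lemma compl_repm [Nonempty V] (hm : RepM G) : RepM Gᶜ := by
  obtain ⟨F, hF, u, v, huv, hnadj, hadj⟩ := hm
  refine ⟨Function.invFun F, bim_inv G hF, F u, F v, hadj.ne, ?_, ?_⟩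
  · rw [SimpleGraph.compl_adj]
    push_neg
    intro _
    exact hadj
  · have h1 : Function.LeftInverse (Function.invFun F) F :=
      Function.leftInverse_invFun hF.1.injective
    rw [h1 u, h1 v, SimpleGraph.compl_adj]
    exact ⟨huv, hnadj⟩

open Classical in
/-- The pairs of distinct nonadjacent vertices in `X`. -/
noncomputable def badPairs (X : Finset V) : Finset (V × V) :=
  (X ×ˢ X).filter fun p => p.1 ≠ p.2 ∧ ¬ G.Adj p.1 p.2

lemma mem_badPairs {X : Finset V} {p : V × V} :
    p ∈ badPairs G X ↔ p.1 ∈ X ∧ p.2 ∈ X ∧ p.1 ≠ p.2 ∧ ¬ G.Adj p.1 p.2 := by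
  classical
  simp only [badPairs, Finset.mem_filter, Finset.mem_product, and_assoc]

/-- Clique-image lemma: every finite set is mapped by some bimorphism onto a clique. -/
lemma clique_image (hG : IBHom G) (hm : RepM G) :
    ∀ (n : ℕ) (X : Finset V), (badPairs G X).card ≤ n →
      ∃ F : V → V, IsBimorphism G F ∧
        ∀ x ∈ X, ∀ y ∈ X, x ≠ y → G.Adj (F x) (F y) := by
  classical
  intro n
  induction n with
  | zero =>
    intro X hX
    refine ⟨id, bim_id G, ?_⟩
    intro x hx y hy hxy
    by_contra h
    have hmem : (x, y) ∈ badPairs G X := (mem_badPairs G).mpr ⟨hx, hy, hxy, h⟩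
    have h0 : (badPairs G X).card = 0 := Nat.le_zero.mp hX
    rw [Finset.card_eq_zero] at h0
    rw [h0] at hmem
    exact absurd hmem (Finset.notMem_empty _)
  | succ n ih =>
    intro X hX
    by_cases hz : badPairs G X = ∅
    · refine ⟨id, bim_id G, ?_⟩
      intro x hx y hy hxy
      by_contra h
      have hmem : (x, y) ∈ badPairs G X := (mem_badPairs G).mpr ⟨hx, hy, hxy, h⟩
      rw [hz] at hmem
      exact absurd hmem (Finset.notMem_empty _)
    · obtain ⟨⟨u, v⟩, hp⟩ := Finset.nonempty_iff_ne_empty.mpr hz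
      obtain ⟨hu, hv, huv, hnadj⟩ := (mem_badPairs G).mp hp
      simp only at hu hv huv hnadj
      obtain ⟨F₀, hF₀, a, b, hab, habn, haba⟩ := hm
      set f : V → V := fun x => if x = u then a else b with hf
      have hfu : f u = a := by simp [hf]
      have hfv : f v = b := by simp [hf, Ne.symm huv]
      have hpi : IsPartialIso G {u, v} f := by
        constructor
        · intro x hx y hy hxy
          simp only [Finset.coe_insert, Set.mem_insert_iff, Finset.coe_singleton,
            Set.mem_singleton_iff] at hx hy
          rcases hx with rfl | rfl <;> rcases hy with rfl | rfl
          · rfl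
          · rw [hfu, hfv] at hxy; exact absurd hxy hab
          · rw [hfu, hfv] at hxy; exact absurd hxy.symm hab
          · rfl
        · intro x hx y hy
          simp only [Finset.mem_insert, Finset.mem_singleton] at hx hy
          rcases hx with rfl | rfl <;> rcases hy with rfl | rfl
          · exact iff_of_false (G.irrefl) (G.irrefl)
          · rw [hfu, hfv]
            exact iff_of_false hnadj habn
          · rw [hfu, hfv]
            exact iff_of_false (fun h => hnadj h.symm) (fun h => habn h.symm)
          · exact iff_of_false (G.irrefl) (G.irrefl)
      obtain ⟨F₁, hF₁, hext⟩ := hG {u, v} f hpi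
      set Φ := F₀ ∘ F₁ with hΦdef
      have hΦ : IsBimorphism G Φ := bim_comp G hF₀ hF₁
      have hΦu : Φ u = F₀ a := by
        simp only [hΦdef, Function.comp_apply, hext u (by simp), hfu]
      have hΦv : Φ v = F₀ b := by
        simp only [hΦdef, Function.comp_apply, hext v (by simp), hfv]
      have hadjΦ : G.Adj (Φ u) (Φ v) := by rw [hΦu, hΦv]; exact haba
      set X' := X.image Φ with hX'
      -- the measure strictly decreases
      have hsub : badPairs G X' ⊆
          ((badPairs G X).image (fun p => (Φ p.1, Φ p.2))).erase (Φ u, Φ v) := by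
        intro p hp'
        obtain ⟨hp1, hp2, hpne, hpnadj⟩ := (mem_badPairs G).mp hp'
        rw [hX', Finset.mem_image] at hp1 hp2
        obtain ⟨x, hx, hxe⟩ := hp1
        obtain ⟨y, hy, hye⟩ := hp2
        have hxy : x ≠ y := by
          intro h; apply hpne
          rw [← hxe, ← hye, h]
        have hxynadj : ¬ G.Adj x y := by
          intro h
          apply hpnadj
          rw [← hxe, ← hye]
          exact hΦ.2 x y h
        refine Finset.mem_erase.mpr ⟨?_, ?_⟩
        · intro h
          apply hpnadj
          have h1 : p.1 = Φ u := by rw [h]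
          have h2 : p.2 = Φ v := by rw [h]
          rw [h1, h2]
          exact hadjΦ
        · rw [Finset.mem_image]
          refine ⟨(x, y), (mem_badPairs G).mpr ⟨hx, hy, hxy, hxynadj⟩, ?_⟩
          simp only [Prod.ext_iff]
          exact ⟨hxe, hye⟩
      have hmemuv : (Φ u, Φ v) ∈ (badPairs G X).image (fun p => (Φ p.1, Φ p.2)) := by
        rw [Finset.mem_image]
        exact ⟨(u, v), hp, rfl⟩
      have hcard : (badPairs G X').card ≤ n := by
        have h1 := Finset.card_le_card hsub
        rw [Finset.card_erase_of_mem hmemuv] at h1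
        have h2 : ((badPairs G X).image (fun p => (Φ p.1, Φ p.2))).card ≤
            (badPairs G X).card := Finset.card_image_le
        have h3 : 1 ≤ ((badPairs G X).image (fun p => (Φ p.1, Φ p.2))).card :=
          Finset.card_pos.mpr ⟨_, hmemuv⟩
        omega
      obtain ⟨F', hF', hcl⟩ := ih X' hcard
      refine ⟨F' ∘ Φ, bim_comp G hF' hΦ, ?_⟩
      intro x hx y hy hxy
      have hΦxy : Φ x ≠ Φ y := fun h => hxy (hΦ.1.injective h)
      exact hcl (Φ x) (Finset.mem_image_of_mem Φ hx) (Φ y)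
        (Finset.mem_image_of_mem Φ hy) hΦxy

end Aux

/-- In an IB-homogeneous graph representing `m`, every finite set is the image under some
bimorphism of an independent set (i.e. the preimage of `X` is independent). -/
theorem stmt7 {V : Type*} (G : SimpleGraph V) (hG : IBHom G) (hm : RepM G)
    (X : Finset V) :
    ∃ F : V → V, IsBimorphism G F ∧ IsIndep G (F ⁻¹' ↑X) := by
  classical
  rcases isEmpty_or_nonempty V with hV | hV
  · exact ⟨id, bim_id G, fun x => (IsEmpty.false x).elim⟩
  · -- work in the complement
    have hGc : IBHom Gᶜ := compl_ibhom G hG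
    have hmc : RepM Gᶜ := compl_repm G hm
    obtain ⟨H, hH, hcl⟩ := clique_image Gᶜ hGc hmc (badPairs Gᶜ X).card X le_rfl
    have hinv : IsBimorphism Gᶜᶜ (Function.invFun H) := bim_inv Gᶜ hH
    rw [compl_compl] at hinv
    refine ⟨Function.invFun H, hinv, ?_⟩
    intro x hx y hy hxy
    simp only [Set.mem_preimage, Finset.mem_coe] at hx hy
    have hinj : Function.Injective (Function.invFun H) := hinv.1.injective
    have hxy' : Function.invFun H x ≠ Function.invFun H y := fun h => hxy (hinj h)
    have hadj := hcl _ hx _ hy hxy'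
    have hr : Function.RightInverse (Function.invFun H) H :=
      Function.rightInverse_invFun hH.1.surjective
    rw [hr x, hr y, SimpleGraph.compl_adj] at hadj
    exact hadj.2
end

section
/- An IB-homogeneous graph that has a bimorphism mapping a nonedge to an edge embeds arbitrarily large finite cliques and arbitrarily large finite independent sets. -/
open scoped Classical

lemma extend_pair {V : Type*} (G : SimpleGraph V) (hG : IBHom G)
    {a b u v : V} (hab : a ≠ b) (huv : u ≠ v)
    (hiff : G.Adj a b ↔ G.Adj u v) :
    ∃ H : V → V, IsBimorphism G H ∧ H a = u ∧ H b = v := by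
  set f : V → V := fun x => if x = a then u else v with hf
  have hfa : f a = u := by simp [hf]
  have hfb : f b = v := by simp [hf, hab.symm]
  have hpi : IsPartialIso G {a, b} f := by
    constructor
    · intro x hx y hy hxy
      simp only [Finset.coe_insert, Set.mem_insert_iff, Finset.coe_singleton,
        Set.mem_singleton_iff] at hx hy
      rcases hx with rfl | rfl <;> rcases hy with rfl | rfl <;>
        simp_all [hfa, hfb]
    · intro x hx y hy
      simp only [Finset.mem_insert, Finset.mem_singleton] at hx hy
      rcases hx with rfl | rfl <;> rcases hy with rfl | rfl
      · exact iff_of_false (G.irrefl) (G.irrefl)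
      · rw [hfa, hfb]; exact hiff
      · constructor
        · intro h; rw [hfb, hfa]; exact (hiff.mp h.symm).symm
        · intro h; rw [hfb, hfa] at h; exact (hiff.mpr h.symm).symm
      · exact iff_of_false (G.irrefl) (G.irrefl)
  obtain ⟨H, hH, hext⟩ := hG {a, b} f hpi
  exact ⟨H, hH, by rw [hext a (by simp), hfa], by rw [hext b (by simp), hfb]⟩

lemma conv_edge {V : Type*} (G : SimpleGraph V) (hG : IBHom G)
    (hm : ∃ F : V → V, IsBimorphism G F ∧
      ∃ u v : V, u ≠ v ∧ ¬ G.Adj u v ∧ G.Adj (F u) (F v))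
    {a b : V} (hab : a ≠ b) (hnadj : ¬ G.Adj a b) :
    ∃ g : V → V, Function.Injective g ∧ (∀ u v, G.Adj u v → G.Adj (g u) (g v)) ∧
      G.Adj (g a) (g b) := by
  obtain ⟨F, hF, u, v, huv, hnuv, hadj⟩ := hm
  obtain ⟨H, hH, ha, hb⟩ := extend_pair G hG hab huv (iff_of_false hnadj hnuv)
  refine ⟨F ∘ H, hF.1.injective.comp hH.1.injective,
    fun x y h => hF.2 _ _ (hH.2 _ _ h), ?_⟩
  simpa [Function.comp, ha, hb] using hadj

lemma conv_nonedge {V : Type*} (G : SimpleGraph V) (hG : IBHom G)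
    (hm : ∃ F : V → V, IsBimorphism G F ∧
      ∃ u v : V, u ≠ v ∧ ¬ G.Adj u v ∧ G.Adj (F u) (F v))
    {a b : V} (hadj : G.Adj a b) :
    ∃ g : V → V, Function.Injective g ∧ (∀ u v, ¬ G.Adj u v → ¬ G.Adj (g u) (g v)) ∧
      ¬ G.Adj (g a) (g b) := by
  obtain ⟨F, hF, u, v, huv, hnuv, hFadj⟩ := hm
  obtain ⟨K, hK, hKu, hKv⟩ := extend_pair G hG hFadj.ne hadj.ne (iff_of_true hFadj hadj)
  have hΦbij : Function.Bijective (K ∘ F) := hK.1.comp hF.1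
  set e := Equiv.ofBijective _ hΦbij with he
  have heu : e u = a := by simp [he, Equiv.ofBijective, Function.comp, hKu]
  have hev : e v = b := by simp [he, Equiv.ofBijective, Function.comp, hKv]
  refine ⟨e.symm, e.symm.injective, ?_, ?_⟩
  · intro x y hxy hc
    have : G.Adj (K (F (e.symm x))) (K (F (e.symm y))) := hK.2 _ _ (hF.2 _ _ hc)
    have hx : K (F (e.symm x)) = x := e.apply_symm_apply x
    have hy : K (F (e.symm y)) = y := e.apply_symm_apply y
    rw [hx, hy] at this
    exact hxy this
  · rw [← heu, ← hev, e.symm_apply_apply, e.symm_apply_apply]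
    exact hnuv

lemma reduce {V : Type*} (R : V → V → Prop) (hdiag : ∀ v, R v v)
    (hconv : ∀ a b : V, a ≠ b → ¬ R a b →
      ∃ g : V → V, Function.Injective g ∧ (∀ u v, R u v → R (g u) (g v)) ∧ R (g a) (g b)) :
    ∀ (m : ℕ) (s : Finset V),
      ((s ×ˢ s).filter (fun p => ¬ R p.1 p.2)).card ≤ m →
      ∃ t : Finset V, t.card = s.card ∧ ∀ x ∈ t, ∀ y ∈ t, R x y := by
  intro m
  induction m with
  | zero =>
    intro s hs
    refine ⟨s, rfl, fun x hx y hy => ?_⟩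
    by_contra hxy
    have : (x, y) ∈ (s ×ˢ s).filter (fun p => ¬ R p.1 p.2) := by
      simp [Finset.mem_filter, Finset.mem_product, hx, hy, hxy]
    have := Finset.card_pos.mpr ⟨_, this⟩
    omega
  | succ m ih =>
    intro s hs
    by_cases h0 : ((s ×ˢ s).filter (fun p => ¬ R p.1 p.2)).card = 0
    · exact ih s (by omega)
    · obtain ⟨⟨a, b⟩, hab⟩ := Finset.card_pos.mp (Nat.pos_of_ne_zero h0)
      rw [Finset.mem_filter, Finset.mem_product] at hab
      obtain ⟨⟨ha, hb⟩, hnab⟩ := hab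
      have hne : a ≠ b := fun h => hnab (h ▸ hdiag a)
      obtain ⟨g, hginj, hgpres, hgab⟩ := hconv a b hne hnab
      set t := s.image g with ht
      have hcard : t.card = s.card := Finset.card_image_of_injective s hginj
      have hsub : (t ×ˢ t).filter (fun p => ¬ R p.1 p.2) ⊆
          (((s ×ˢ s).filter (fun p => ¬ R p.1 p.2)).erase (a, b)).image (Prod.map g g) := by
        intro p hp
        rw [Finset.mem_filter, Finset.mem_product] at hp
        obtain ⟨⟨hp1, hp2⟩, hpn⟩ := hp
        obtain ⟨x0, hx0, hx0e⟩ := Finset.mem_image.mp hp1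
        obtain ⟨y0, hy0, hy0e⟩ := Finset.mem_image.mp hp2
        have hn0 : ¬ R x0 y0 := fun h => hpn (hx0e ▸ hy0e ▸ hgpres _ _ h)
        have hne0 : (x0, y0) ≠ (a, b) := by
          intro h
          obtain ⟨rfl, rfl⟩ := Prod.mk.injEq .. ▸ h
          exact hpn (hx0e ▸ hy0e ▸ hgab)
        refine Finset.mem_image.mpr ⟨(x0, y0), ?_, ?_⟩
        · exact Finset.mem_erase.mpr ⟨hne0, by
            rw [Finset.mem_filter, Finset.mem_product]; exact ⟨⟨hx0, hy0⟩, hn0⟩⟩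
        · simp [Prod.map, hx0e, hy0e]
      have hle : ((t ×ˢ t).filter (fun p => ¬ R p.1 p.2)).card ≤ m := by
        have h1 := Finset.card_le_card hsub
        have h2 := Finset.card_image_le (s := ((s ×ˢ s).filter
          (fun p => ¬ R p.1 p.2)).erase (a, b)) (f := Prod.map g g)
        have h3 := Finset.card_erase_of_mem (by
          rw [Finset.mem_filter, Finset.mem_product]; exact ⟨⟨ha, hb⟩, hnab⟩ :
          (a, b) ∈ (s ×ˢ s).filter (fun p => ¬ R p.1 p.2))
        omega
      obtain ⟨t', h1, h2⟩ := ih t hle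
      exact ⟨t', h1.trans hcard, h2⟩


private lemma stmt8_aux {V : Type*} [Countable V] [Infinite V] (G : SimpleGraph V)
    (hG : IBHom G) (hm : ∃ F : V → V, IsBimorphism G F ∧
      ∃ u v : V, u ≠ v ∧ ¬ G.Adj u v ∧ G.Adj (F u) (F v)) :
    ∀ n : ℕ, (∃ s : Finset V, s.card = n ∧ G.IsClique ↑s) ∧
      (∃ s : Finset V, s.card = n ∧ (↑s : Set V).Pairwise fun u v => ¬ G.Adj u v) := by
  intro n
  obtain ⟨s, hs⟩ : ∃ s : Finset V, s.card = n := by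
    obtain ⟨s, hs⟩ := Infinite.exists_subset_card_eq V n
    exact ⟨s, hs⟩
  constructor
  · obtain ⟨t, h1, h2⟩ := reduce (fun u v => u = v ∨ G.Adj u v)
      (fun v => Or.inl rfl)
      (fun a b hab hnr => by
        obtain ⟨g, h1, h2, h3⟩ := conv_edge G hG hm hab (fun h => hnr (Or.inr h))
        exact ⟨g, h1, fun u v h => h.elim (fun h => Or.inl (h ▸ rfl)) (fun h => Or.inr (h2 _ _ h)),
          Or.inr h3⟩)
      _ s le_rfl
    refine ⟨t, h1.trans hs, (SimpleGraph.isClique_iff G).mpr fun x hx y hy hxy => ?_⟩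
    exact (h2 x hx y hy).resolve_left hxy
  · obtain ⟨t, h1, h2⟩ := reduce (fun u v => ¬ G.Adj u v)
      (fun v => G.irrefl)
      (fun a b hab hnr => by
        obtain ⟨g, h1, h2, h3⟩ := conv_nonedge G hG hm (not_not.mp hnr)
        exact ⟨g, h1, h2, h3⟩)
      _ s le_rfl
    exact ⟨t, h1.trans hs, fun x hx y hy _ => h2 x hx y hy⟩

/-- A countably infinite IB-homogeneous graph representing `m` embeds arbitrarily large
cliques and independent sets. -/
theorem stmt8 {V : Type*} [Countable V] [Infinite V] (G : SimpleGraph V)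
    (hG : IBHom G) (hm : RepM G) :
    ∀ n : ℕ, (∃ s : Finset V, s.card = n ∧ G.IsClique ↑s) ∧
      (∃ s : Finset V, s.card = n ∧ IsIndep G ↑s) := by
  exact stmt8_aux G hG hm
end

section
/- Let G be an IB-homogeneous graph that represents m (some bimorphism maps a nonedge to an edge). Then G has no finite maximal independent set: for every finite independent set A in G there is a vertex outside A adjacent to no vertex of A. -/
open scoped Classical


/-- A "co-bimorphism": a bijection whose inverse is a bimorphism. -/
def CoBim {V : Type*} (G : SimpleGraph V) (M : V → V) : Prop :=
  Function.Bijective M ∧ ∀ x y, G.Adj (M x) (M y) → G.Adj x y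

/-- Key lemma: any finite set can be mapped to an independent set by a co-bimorphism. -/
lemma key {V : Type*} (G : SimpleGraph V) (hG : IBHom G)
    (u0 v0 : V) (huv : ¬ G.Adj u0 v0) (F : V → V) (hF : IsBimorphism G F)
    (hFuv : G.Adj (F u0) (F v0)) (X : Finset V) :
    ∀ k : ℕ, ∀ M : V → V, CoBim G M →
      ((X ×ˢ X).filter (fun p => G.Adj (M p.1) (M p.2))).card ≤ k →
      ∃ M' : V → V, CoBim G M' ∧ ∀ x ∈ X, ∀ y ∈ X, ¬ G.Adj (M' x) (M' y) := by
  obtain ⟨Fi, hFi1, hFi2⟩ := Function.bijective_iff_has_inverse.mp hF.1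
  have hFi1' : ∀ z, Fi (F z) = z := hFi1
  have hFi2' : ∀ z, F (Fi z) = z := hFi2
  have hFiBij : Function.Bijective Fi :=
    Function.bijective_iff_has_inverse.mpr ⟨F, hFi2, hFi1⟩
  intro k
  induction k with
  | zero =>
    intro M hM hcard
    refine ⟨M, hM, ?_⟩
    intro x hx y hy hadj
    have hmem : (x, y) ∈ (X ×ˢ X).filter (fun p => G.Adj (M p.1) (M p.2)) := by
      rw [Finset.mem_filter, Finset.mem_product]
      exact ⟨⟨hx, hy⟩, hadj⟩
    have := Finset.card_pos.mpr ⟨_, hmem⟩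
    omega
  | succ k ih =>
    intro M hM hcard
    by_cases hex : ∃ x ∈ X, ∃ y ∈ X, G.Adj (M x) (M y)
    · obtain ⟨x, hx, y, hy, hxy⟩ := hex
      have hMxy : M x ≠ M y := G.ne_of_adj hxy
      have hFne : F u0 ≠ F v0 := G.ne_of_adj hFuv
      set g : V → V := fun z => if z = F u0 then M x else M y with hg
      have hgu : g (F u0) = M x := by rw [hg]; simp
      have hgv : g (F v0) = M y := by rw [hg]; simp [hFne.symm]
      have hinj : Set.InjOn g ↑({F u0, F v0} : Finset V) := by
        intro a ha b hb hab
        have ha' : a = F u0 ∨ a = F v0 := by simpa using ha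
        have hb' : b = F u0 ∨ b = F v0 := by simpa using hb
        rcases ha' with rfl | rfl <;> rcases hb' with rfl | rfl
        · rfl
        · rw [hgu, hgv] at hab; exact absurd hab hMxy
        · rw [hgv, hgu] at hab; exact absurd hab.symm hMxy
        · rfl
      have hiff : ∀ a ∈ ({F u0, F v0} : Finset V), ∀ b ∈ ({F u0, F v0} : Finset V),
          (G.Adj a b ↔ G.Adj (g a) (g b)) := by
        intro a ha b hb
        have ha' : a = F u0 ∨ a = F v0 := by simpa using ha
        have hb' : b = F u0 ∨ b = F v0 := by simpa using hb
        rcases ha' with rfl | rfl <;> rcases hb' with rfl | rfl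
        · rw [hgu]; exact iff_of_false G.irrefl G.irrefl
        · rw [hgu, hgv]; exact iff_of_true hFuv hxy
        · rw [hgv, hgu]; exact iff_of_true hFuv.symm hxy.symm
        · rw [hgv]; exact iff_of_false G.irrefl G.irrefl
      obtain ⟨H, hHb, hHg⟩ := hG ({F u0, F v0} : Finset V) g ⟨hinj, hiff⟩
      have hHu : H (F u0) = M x := by
        rw [hHg (F u0) (by simp), hgu]
      have hHv : H (F v0) = M y := by
        rw [hHg (F v0) (by simp), hgv]
      obtain ⟨Hi, hHi1, hHi2⟩ := Function.bijective_iff_has_inverse.mp hHb.1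
      have hHi1' : ∀ z, Hi (H z) = z := hHi1
      have hHi2' : ∀ z, H (Hi z) = z := hHi2
      have hHiBij : Function.Bijective Hi :=
        Function.bijective_iff_has_inverse.mpr ⟨H, hHi2, hHi1⟩
      set M' : V → V := fun z => Fi (Hi (M z)) with hM'
      have haux : ∀ p q : V, G.Adj (M' p) (M' q) → G.Adj (M p) (M q) := by
        intro p q hadj
        have h1 : G.Adj (F (Fi (Hi (M p)))) (F (Fi (Hi (M q)))) := hF.2 _ _ hadj
        rw [hFi2', hFi2'] at h1
        have h2 : G.Adj (H (Hi (M p))) (H (Hi (M q))) := hHb.2 _ _ h1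
        rw [hHi2', hHi2'] at h2
        exact h2
      have hM'co : CoBim G M' := by
        refine ⟨?_, fun p q h => hM.2 _ _ (haux p q h)⟩
        exact (hFiBij.comp hHiBij).comp hM.1
      have hM'x : M' x = u0 := by
        show Fi (Hi (M x)) = u0
        rw [← hHu, hHi1', hFi1']
      have hM'y : M' y = v0 := by
        show Fi (Hi (M y)) = v0
        rw [← hHv, hHi1', hFi1']
      have hsub : ((X ×ˢ X).filter (fun p => G.Adj (M' p.1) (M' p.2))) ⊆
          ((X ×ˢ X).filter (fun p => G.Adj (M p.1) (M p.2))) := by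
        intro p hp
        rw [Finset.mem_filter] at hp ⊢
        exact ⟨hp.1, haux _ _ hp.2⟩
      have hmem : (x, y) ∈ (X ×ˢ X).filter (fun p => G.Adj (M p.1) (M p.2)) := by
        rw [Finset.mem_filter, Finset.mem_product]
        exact ⟨⟨hx, hy⟩, hxy⟩
      have hnot : (x, y) ∉ (X ×ˢ X).filter (fun p => G.Adj (M' p.1) (M' p.2)) := by
        rw [Finset.mem_filter]
        rintro ⟨-, hadj⟩
        rw [hM'x, hM'y] at hadj
        exact huv hadj
      have hss : ((X ×ˢ X).filter (fun p => G.Adj (M' p.1) (M' p.2))) ⊂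
          ((X ×ˢ X).filter (fun p => G.Adj (M p.1) (M p.2))) :=
        (Finset.ssubset_iff_of_subset hsub).mpr ⟨(x, y), hmem, hnot⟩
      have hlt := Finset.card_lt_card hss
      exact ih M' hM'co (by omega)
    · push_neg at hex
      exact ⟨M, hM, hex⟩

/-- An IB-homogeneous graph representing `m` has no finite maximal independent set. -/
theorem stmt9 {V : Type*} (G : SimpleGraph V) (hG : IBHom G) (hm : RepM G)
    (A : Finset V) (hA : IsIndep G ↑A) :
    ∃ v : V, v ∉ A ∧ ∀ a ∈ A, ¬ G.Adj v a := by
  obtain ⟨F, hF, u0, v0, hne, huv, hFuv⟩ := hm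
  obtain ⟨w, hw⟩ : ∃ w, w ∉ A := by
    by_cases h1 : F u0 ∈ A
    · refine ⟨F v0, fun h2 => ?_⟩
      exact hA (Finset.mem_coe.mpr h1) (Finset.mem_coe.mpr h2) (G.ne_of_adj hFuv) hFuv
    · exact ⟨F u0, h1⟩
  obtain ⟨M, hM, hMind⟩ := key G hG u0 v0 huv F hF hFuv (insert w A)
    (((insert w A) ×ˢ (insert w A)).filter
      (fun p => G.Adj (id p.1) (id p.2))).card
    id ⟨Function.bijective_id, fun _ _ h => h⟩ le_rfl
  have hpi : IsPartialIso G A M := by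
    refine ⟨fun a _ b _ hab => hM.1.1 hab, ?_⟩
    intro a ha b hb
    by_cases hab : a = b
    · subst hab
      exact iff_of_false G.irrefl G.irrefl
    · exact iff_of_false (hA (Finset.mem_coe.mpr ha) (Finset.mem_coe.mpr hb) hab)
        (hMind a (Finset.mem_insert_of_mem ha) b (Finset.mem_insert_of_mem hb))
  obtain ⟨H, hHb, hHA⟩ := hG A M hpi
  obtain ⟨Hi, hHi1, hHi2⟩ := Function.bijective_iff_has_inverse.mp hHb.1
  have hHi2' : ∀ z, H (Hi z) = z := hHi2
  refine ⟨Hi (M w), ?_, ?_⟩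
  · intro hz
    have h2 : H (Hi (M w)) = M (Hi (M w)) := hHA _ hz
    rw [hHi2'] at h2
    have h3 : w = Hi (M w) := hM.1.1 h2
    rw [← h3] at hz
    exact hw hz
  · intro a ha hadj
    have h1 : G.Adj (H (Hi (M w))) (H a) := hHb.2 _ _ hadj
    rw [hHi2' (M w), hHA a ha] at h1
    exact hMind w (Finset.mem_insert_self w A) a (Finset.mem_insert_of_mem ha) h1
end

section
/- Let G be a graph, I a maximal independent set in G, and suppose every vertex of G has at most k neighbors in I, where k is a positive integer. Then for every finite subset X of G, the set of vertices of I that are in X or adjacent to some vertex of X has size at most k·|X|. Consequently, if I is infinite, every finite subset of G has a co-cone (a vertex outside X adjacent to no element of X). -/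
/-- Counting neighbours in a maximal independent set: if every vertex has at most `k`
neighbours in a maximal independent set `I`, then for finite `X` the portion of `I` met or
touched by `X` has size at most `k * |X|`; hence if `I` is infinite, co-cones exist. -/
theorem stmt11 {V : Type*} (G : SimpleGraph V) (I : Set V) (hI : IsIndep G I)
    (hmax : ∀ v : V, v ∉ I → ∃ u ∈ I, G.Adj v u)
    (k : ℕ) (hk : 0 < k)
    (hdeg : ∀ v : V, {u ∈ I | G.Adj v u}.encard ≤ k) :
    (∀ X : Finset V,
      {u ∈ I | u ∈ X ∨ ∃ x ∈ X, G.Adj u x}.encard ≤ (k * X.card : ℕ)) ∧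
    (I.Infinite → ∀ X : Finset V, ∃ v : V, v ∉ X ∧ ∀ x ∈ X, ¬ G.Adj v x) := by
  have key : ∀ a : V, {u ∈ I | u = a ∨ G.Adj u a}.encard ≤ (k : ℕ∞) := by
    intro a
    by_cases ha : a ∈ I
    · have hsub : {u ∈ I | u = a ∨ G.Adj u a} ⊆ {a} := by
        rintro u ⟨huI, h | h⟩
        · exact h
        · by_cases hua : u = a
          · exact hua
          · exact absurd h (hI huI ha hua)
      calc ({u ∈ I | u = a ∨ G.Adj u a}).encard ≤ ({a} : Set V).encard :=
            Set.encard_le_encard hsub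
        _ = 1 := Set.encard_singleton a
        _ ≤ (k : ℕ∞) := by exact_mod_cast Nat.one_le_cast.mpr hk
    · have hsub : {u ∈ I | u = a ∨ G.Adj u a} ⊆ {u ∈ I | G.Adj a u} := by
        rintro u ⟨huI, h | h⟩
        · exact absurd (h ▸ huI) ha
        · exact ⟨huI, h.symm⟩
      exact le_trans (Set.encard_le_encard hsub) (hdeg a)
  have part1 : ∀ X : Finset V,
      {u ∈ I | u ∈ X ∨ ∃ x ∈ X, G.Adj u x}.encard ≤ (k * X.card : ℕ) := by
    intro X
    classical
    induction X using Finset.induction_on with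
    | empty =>
      have : {u ∈ I | u ∈ (∅ : Finset V) ∨ ∃ x ∈ (∅ : Finset V), G.Adj u x} = ∅ := by
        ext u; simp
      simp [this]
    | @insert a X haX ih =>
      have hsub : {u ∈ I | u ∈ insert a X ∨ ∃ x ∈ insert a X, G.Adj u x} ⊆
          {u ∈ I | u = a ∨ G.Adj u a} ∪ {u ∈ I | u ∈ X ∨ ∃ x ∈ X, G.Adj u x} := by
        rintro u ⟨huI, h | ⟨x, hx, hadj⟩⟩
        · rcases Finset.mem_insert.mp h with h | h
          · exact Or.inl ⟨huI, Or.inl h⟩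
          · exact Or.inr ⟨huI, Or.inl h⟩
        · rcases Finset.mem_insert.mp hx with h | h
          · exact Or.inl ⟨huI, Or.inr (h ▸ hadj)⟩
          · exact Or.inr ⟨huI, Or.inr ⟨x, h, hadj⟩⟩
      calc {u ∈ I | u ∈ insert a X ∨ ∃ x ∈ insert a X, G.Adj u x}.encard
          ≤ _ := Set.encard_le_encard hsub
        _ ≤ {u ∈ I | u = a ∨ G.Adj u a}.encard
              + {u ∈ I | u ∈ X ∨ ∃ x ∈ X, G.Adj u x}.encard := Set.encard_union_le _ _
        _ ≤ (k : ℕ∞) + (k * X.card : ℕ) := add_le_add (key a) ih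
        _ = ((k * (insert a X).card : ℕ) : ℕ∞) := by
            rw [Finset.card_insert_of_notMem haX]
            push_cast
            ring
  refine ⟨part1, fun hinf X => ?_⟩
  have hne : (I \ {u ∈ I | u ∈ X ∨ ∃ x ∈ X, G.Adj u x}).Nonempty := by
    by_contra h
    rw [Set.not_nonempty_iff_eq_empty, Set.diff_eq_empty] at h
    have : I.encard ≤ (k * X.card : ℕ) := le_trans (Set.encard_le_encard h) (part1 X)
    rw [Set.Infinite.encard_eq hinf] at this
    exact (ENat.coe_lt_top _).not_ge this
  obtain ⟨v, hvI, hv⟩ := hne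
  simp only [Set.mem_setOf_eq, not_or, not_and, not_exists] at hv
  refine ⟨v, ?_, ?_⟩
  · intro hvX; exact (hv hvI).1 hvX
  · intro x hx hadj; exact (hv hvI).2 x hx hadj
end

section
/- Let G be a countable IB-homogeneous graph with finite star number that represents m (some bimorphism maps a nonedge to an edge). Then every finite subset of G has a co-cone: a vertex outside the set adjacent to none of its elements. -/
section Aux

open Classical in
/-- If `G` represents `m`, the vertex type is infinite. -/
lemma RepM.infinite {V : Type*} (G : SimpleGraph V) (hm : RepM G) : Infinite V := by
  by_contra hfin
  rw [not_infinite_iff_finite] at hfin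
  obtain ⟨F, ⟨hbij, hpres⟩, u, v, hne, huv, hadj⟩ := hm
  let P := {x : V × V // G.Adj x.1 x.2}
  have : Finite P := inferInstance
  let f : P → P := fun x => ⟨(F x.1.1, F x.1.2), hpres _ _ x.2⟩
  have hinj : Function.Injective f := by
    rintro ⟨⟨p, q⟩, h1⟩ ⟨⟨p', q'⟩, h2⟩ h
    have h' := congrArg Subtype.val h
    simp only [f, Prod.mk.injEq] at h'
    have := hbij.1 h'.1
    have := hbij.1 h'.2
    simp_all
  have hsurj : Function.Surjective f := (Finite.injective_iff_surjective).mp hinj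
  obtain ⟨⟨⟨p, q⟩, hpq⟩, hfpq⟩ := hsurj ⟨(F u, F v), hadj⟩
  have hfpq' := congrArg Subtype.val hfpq
  simp only [f, Prod.mk.injEq] at hfpq'
  have hp : p = u := hbij.1 hfpq'.1
  have hq : q = v := hbij.1 hfpq'.2
  exact huv (hp ▸ hq ▸ hpq)

open Classical in
/-- Key lemma: from IB-homogeneity and representing `m`, we can kill an edge:
for any edge `x ~ y` there is a bimorphism `M` and a nonedge `(u, v)` with
`M u = x` and `M v = y`. -/
lemma kill_edge {V : Type*} (G : SimpleGraph V) (hG : IBHom G) (hm : RepM G)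
    {x y : V} (hxy : G.Adj x y) :
    ∃ M : V → V, IsBimorphism G M ∧ ∃ u v : V, ¬ G.Adj u v ∧ M u = x ∧ M v = y := by
  obtain ⟨F, hF, u, v, hne, huv, hadj⟩ := hm
  -- partial iso sending F u ↦ x, F v ↦ y (edge to edge)
  have hFne : F u ≠ F v := hadj.ne
  set g : V → V := fun w => if w = F u then x else if w = F v then y else w with hg
  have hgu : g (F u) = x := by simp [hg]
  have hgv : g (F v) = y := by simp [hg, hFne.symm]
  have hpi : IsPartialIso G {F u, F v} g := by
    constructor
    · intro a ha b hb hab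
      simp only [Finset.coe_insert, Finset.coe_singleton, Set.mem_insert_iff,
        Set.mem_singleton_iff] at ha hb
      rcases ha with rfl | rfl <;> rcases hb with rfl | rfl <;>
        simp_all [hxy.ne, hxy.ne']
    · intro a ha b hb
      simp only [Finset.mem_insert, Finset.mem_singleton] at ha hb
      rcases ha with rfl | rfl <;> rcases hb with rfl | rfl
      · rw [hgu]; exact iff_of_false (G.irrefl) (G.irrefl)
      · rw [hgu, hgv]; exact iff_of_true hadj hxy
      · rw [hgu, hgv]; exact iff_of_true hadj.symm hxy.symm
      · rw [hgv]; exact iff_of_false (G.irrefl) (G.irrefl)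
  obtain ⟨H, hH, hHx⟩ := hG {F u, F v} g hpi
  refine ⟨H ∘ F, ⟨hH.1.comp hF.1, fun a b hab => hH.2 _ _ (hF.2 _ _ hab)⟩, u, v, huv, ?_, ?_⟩
  · show H (F u) = x
    rw [hHx (F u) (by simp), hgu]
  · show H (F v) = y
    rw [hHx (F v) (by simp), hgv]

open Classical in
/-- Independent sets of every finite size exist. -/
lemma indep_of_card {V : Type*} (G : SimpleGraph V) (hG : IBHom G) (hm : RepM G)
    (n : ℕ) : ∃ T : Finset V, T.card = n ∧ IsIndep G ↑T := by
  have : Infinite V := hm.infinite G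
  obtain ⟨S, hS⟩ := Infinite.exists_subset_card_eq V n
  -- strong induction on the number of adjacent pairs in S
  suffices h : ∀ (m : ℕ) (S : Finset V),
      ((S ×ˢ S).filter fun p => G.Adj p.1 p.2).card ≤ m →
      ∃ T : Finset V, T.card = S.card ∧ IsIndep G ↑T by
    obtain ⟨T, hT1, hT2⟩ := h _ S le_rfl
    exact ⟨T, hT1.trans hS, hT2⟩
  intro m
  induction m with
  | zero =>
    intro S hcard
    refine ⟨S, rfl, ?_⟩
    intro a ha b hb hab hadj
    have : ((a, b) : V × V) ∈ (S ×ˢ S).filter fun p => G.Adj p.1 p.2 := by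
      simp only [Finset.mem_filter, Finset.mem_product]
      exact ⟨⟨ha, hb⟩, hadj⟩
    have := Finset.card_pos.mpr ⟨_, this⟩
    omega
  | succ m ih =>
    intro S hcard
    set E := (S ×ˢ S).filter fun p => G.Adj p.1 p.2 with hE
    rcases E.eq_empty_or_nonempty with hemp | ⟨⟨x, y⟩, hmem⟩
    · refine ⟨S, rfl, ?_⟩
      intro a ha b hb hab hadj
      have : ((a, b) : V × V) ∈ E := by
        simp only [hE, Finset.mem_filter, Finset.mem_product]
        exact ⟨⟨ha, hb⟩, hadj⟩
      simp [hemp] at this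
    · simp only [hE, Finset.mem_filter, Finset.mem_product] at hmem
      obtain ⟨⟨hxS, hyS⟩, hxy⟩ := hmem
      obtain ⟨M, ⟨hMbij, hMpres⟩, u, v, huv, hMu, hMv⟩ := kill_edge G hG hm hxy
      set S' := S.preimage M (hMbij.1.injOn) with hS'
      have hmemS' : ∀ w, w ∈ S' ↔ M w ∈ S := fun w => Finset.mem_preimage
      -- S' has the same cardinality as S
      have hScard : S'.card = S.card := by
        have himg : S'.image M = S := by
          ext w
          simp only [Finset.mem_image]
          constructor
          · rintro ⟨p, hp, rfl⟩; exact (hmemS' p).mp hp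
          · intro hw
            obtain ⟨p, rfl⟩ := hMbij.2 w
            exact ⟨p, (hmemS' p).mpr hw, rfl⟩
        calc S'.card = (S'.image M).card := (Finset.card_image_of_injective _ hMbij.1).symm
          _ = S.card := by rw [himg]
      -- edge count strictly decreases
      have hlt : ((S' ×ˢ S').filter fun p => G.Adj p.1 p.2).card ≤ m := by
        have hsub : ((S' ×ˢ S').filter fun p => G.Adj p.1 p.2).card ≤
            (E.erase (x, y)).card := by
          apply Finset.card_le_card_of_injOn (fun p => (M p.1, M p.2))
          · rintro ⟨p, q⟩ hp
            simp only [Finset.mem_coe, Finset.mem_filter, Finset.mem_product, hmemS'] at hp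
            obtain ⟨⟨hp1, hp2⟩, hpq⟩ := hp
            simp only [Finset.mem_coe, Finset.mem_erase, hE, Finset.mem_filter, Finset.mem_product]
            refine ⟨?_, ⟨hp1, hp2⟩, hMpres _ _ hpq⟩
            intro h
            rw [Prod.mk.injEq] at h
            have : p = u := hMbij.1 (h.1.trans hMu.symm)
            have : q = v := hMbij.1 (h.2.trans hMv.symm)
            subst this; subst ‹p = u›
            exact huv hpq
          · rintro ⟨p, q⟩ _ ⟨p', q'⟩ _ h
            rw [Prod.mk.injEq] at h ⊢
            exact ⟨hMbij.1 h.1, hMbij.1 h.2⟩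
        have hmemE : ((x, y) : V × V) ∈ E := by
          simp only [hE, Finset.mem_filter, Finset.mem_product]
          exact ⟨⟨hxS, hyS⟩, hxy⟩
        have := Finset.card_erase_lt_of_mem hmemE
        omega
      obtain ⟨T, hT1, hT2⟩ := ih S' hlt
      exact ⟨T, hT1.trans hScard, hT2⟩

end Aux

/-- A countable IB-homogeneous graph with finite star number representing `m` has the
co-cone property: every finite subset has a co-cone. -/
theorem stmt12 {V : Type*} [Countable V] (G : SimpleGraph V) (hG : IBHom G) (hm : RepM G)
    (hstar : ∃ k : ℕ, ∀ (c : V) (s : Finset V),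
      IsIndep G ↑s → (∀ v ∈ s, G.Adj c v) → s.card ≤ k) :
    ∀ X : Finset V, ∃ v : V, v ∉ X ∧ ∀ x ∈ X, ¬ G.Adj v x := by
  classical
  obtain ⟨k, hk⟩ := hstar
  intro X
  obtain ⟨I, hIcard, hIindep⟩ := indep_of_card G hG hm (X.card * k + X.card + 1)
  by_contra hcon
  push_neg at hcon
  -- every v ∈ I is in X or adjacent to some x ∈ X
  have hsub : I ⊆ X ∪ X.biUnion (fun x => I.filter fun v => G.Adj x v) := by
    intro v hv
    rcases Classical.em (v ∈ X) with h | h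
    · exact Finset.mem_union_left _ h
    · obtain ⟨x, hx, hadj⟩ := hcon v h
      refine Finset.mem_union_right _ (Finset.mem_biUnion.mpr ⟨x, hx, ?_⟩)
      exact Finset.mem_filter.mpr ⟨hv, hadj.symm⟩
  have hbound : ∀ x ∈ X, (I.filter fun v => G.Adj x v).card ≤ k := by
    intro x hx
    apply hk x
    · intro a ha b hb hab
      exact hIindep (by simpa using (Finset.mem_filter.mp (by simpa using ha)).1)
        (by simpa using (Finset.mem_filter.mp (by simpa using hb)).1) hab
    · intro v hv
      exact (Finset.mem_filter.mp hv).2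
  have h1 : I.card ≤ X.card + X.card * k := by
    calc I.card ≤ (X ∪ X.biUnion (fun x => I.filter fun v => G.Adj x v)).card :=
          Finset.card_le_card hsub
      _ ≤ X.card + (X.biUnion (fun x => I.filter fun v => G.Adj x v)).card :=
          Finset.card_union_le _ _
      _ ≤ X.card + ∑ x ∈ X, (I.filter fun v => G.Adj x v).card := by
          gcongr
          exact Finset.card_biUnion_le
      _ ≤ X.card + ∑ _x ∈ X, k := by
          gcongr with x hx
          exact hbound x hx
      _ = X.card + X.card * k := by rw [Finset.sum_const, smul_eq_mul]
  omega
end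

section
/- Let G be a countable graph such that every finite subset of G has a cone (a vertex adjacent to all of its elements) and every finite subset has a co-cone (a vertex outside the set adjacent to none of its elements). Then G is MB-homogeneous: every injective homomorphism between finite induced subgraphs of G extends to a bimorphism of G. -/
/-- A countable graph with the cone property and the co-cone property is MB-homogeneous. -/
theorem stmt13 {V : Type*} [Countable V] (G : SimpleGraph V)
    (hcone : ∀ X : Finset V, ∃ v : V, ∀ x ∈ X, G.Adj v x)
    (hcocone : ∀ X : Finset V, ∃ v : V, v ∉ X ∧ ∀ x ∈ X, ¬ G.Adj v x) :
    ∀ (S : Finset V) (f : V → V), Set.InjOn f S →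
      (∀ u ∈ S, ∀ v ∈ S, G.Adj u v → G.Adj (f u) (f v)) →
      ∃ F : V → V, IsBimorphism G F ∧ ∀ x ∈ S, F x = f x := by
  intro S f hinj hhom
  classical
  rcases isEmpty_or_nonempty V with h | h
  · exact ⟨id, ⟨Function.bijective_id, fun u _ _ => (h.false u).elim⟩,
      fun x _ => (h.false x).elim⟩
  have hInf : Infinite V := by
    rw [← not_finite_iff_infinite]
    intro hfin
    haveI := Fintype.ofFinite V
    obtain ⟨v, hv, -⟩ := hcocone Finset.univ
    exact hv (Finset.mem_univ v)
  obtain ⟨e⟩ : Nonempty (ℕ ≃ V) := nonempty_equiv_of_countable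
  set P : Finset V → (V → V) → Prop := fun D g =>
    Set.InjOn g D ∧ ∀ u ∈ D, ∀ v ∈ D, G.Adj u v → G.Adj (g u) (g v) with hPdef
  have key : ∀ (D : Finset V) (g : V → V) (a : V), ∃ (D' : Finset V) (g' : V → V),
      P D g → (D ⊆ D' ∧ a ∈ D' ∧ (∃ x ∈ D', g' x = a) ∧
        (∀ x ∈ D, g' x = g x) ∧ P D' g') := by
    intro D g a
    by_cases hPDg : P D g
    · obtain ⟨hi, hh⟩ := hPDg
      -- Step A: ensure `a` is in the domain (forth).
      have stepA : ∃ (D1 : Finset V) (g1 : V → V),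
          D ⊆ D1 ∧ a ∈ D1 ∧ (∀ x ∈ D, g1 x = g x) ∧ P D1 g1 := by
        by_cases ha : a ∈ D
        · exact ⟨D, g, subset_rfl, ha, fun x _ => rfl, hi, hh⟩
        obtain ⟨w, hw⟩ := hcone (D.image g)
        have hw' : ∀ x ∈ D, G.Adj w (g x) := fun x hx =>
          hw _ (Finset.mem_image_of_mem g hx)
        refine ⟨insert a D, Function.update g a w, Finset.subset_insert _ _,
          Finset.mem_insert_self _ _,
          fun x hx => Function.update_of_ne (by rintro rfl; exact ha hx) _ _, ?_, ?_⟩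
        · intro x hx y hy hxy
          simp only [Finset.coe_insert, Set.mem_insert_iff, Finset.mem_coe] at hx hy
          have hne : ∀ z ∈ D, z ≠ a := by rintro z hz rfl; exact ha hz
          rcases hx with rfl | hx <;> rcases hy with rfl | hy
          · rfl
          · rw [Function.update_self, Function.update_of_ne (hne y hy)] at hxy
            exact absurd (hxy ▸ hw' y hy) (G.irrefl)
          · rw [Function.update_self, Function.update_of_ne (hne x hx)] at hxy
            exact absurd (hxy ▸ hw' x hx) (G.irrefl)
          · rw [Function.update_of_ne (hne x hx), Function.update_of_ne (hne y hy)] at hxy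
            exact hi hx hy hxy
        · intro u hu v hv huv
          by_cases hua : u = a <;> by_cases hva : v = a
          · rw [hua, hva] at huv; exact (G.irrefl huv).elim
          · have hv' : v ∈ D := (Finset.mem_insert.mp hv).resolve_left hva
            rw [hua, Function.update_self, Function.update_of_ne hva]
            exact hw' v hv'
          · have hu' : u ∈ D := (Finset.mem_insert.mp hu).resolve_left hua
            rw [hva, Function.update_self, Function.update_of_ne hua]
            exact (hw' u hu').symm
          · have hu' : u ∈ D := (Finset.mem_insert.mp hu).resolve_left hua
            have hv' : v ∈ D := (Finset.mem_insert.mp hv).resolve_left hva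
            rw [Function.update_of_ne hua, Function.update_of_ne hva]
            exact hh u hu' v hv' huv
      obtain ⟨D1, g1, h1, h2, h3, hi1, hh1⟩ := stepA
      -- Step B: ensure `a` is in the range (back).
      by_cases hb : ∃ x ∈ D1, g1 x = a
      · exact ⟨D1, g1, fun _ => ⟨h1, h2, hb, h3, hi1, hh1⟩⟩
      obtain ⟨u, hu, hnadj⟩ := hcocone D1
      have hne : ∀ z ∈ D1, z ≠ u := by rintro z hz rfl; exact hu hz
      refine ⟨insert u D1, Function.update g1 u a, fun _ =>
        ⟨h1.trans (Finset.subset_insert _ _), Finset.mem_insert_of_mem h2,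
          ⟨u, Finset.mem_insert_self _ _, Function.update_self _ _ _⟩,
          fun x hx => by
            rw [Function.update_of_ne (hne x (h1 hx))]; exact h3 x hx, ?_, ?_⟩⟩
      · intro x hx y hy hxy
        simp only [Finset.coe_insert, Set.mem_insert_iff, Finset.mem_coe] at hx hy
        rcases hx with rfl | hx <;> rcases hy with rfl | hy
        · rfl
        · rw [Function.update_self, Function.update_of_ne (hne y hy)] at hxy
          exact absurd ⟨y, hy, hxy.symm⟩ hb
        · rw [Function.update_self, Function.update_of_ne (hne x hx)] at hxy
          exact absurd ⟨x, hx, hxy⟩ hb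
        · rw [Function.update_of_ne (hne x hx), Function.update_of_ne (hne y hy)] at hxy
          exact hi1 hx hy hxy
      · intro x hx y hy hxy
        by_cases hxu : x = u <;> by_cases hyu : y = u
        · rw [hxu, hyu] at hxy; exact (G.irrefl hxy).elim
        · have hy' : y ∈ D1 := (Finset.mem_insert.mp hy).resolve_left hyu
          rw [hxu] at hxy; exact (hnadj y hy' hxy).elim
        · have hx' : x ∈ D1 := (Finset.mem_insert.mp hx).resolve_left hxu
          rw [hyu] at hxy; exact (hnadj x hx' hxy.symm).elim
        · have hx' : x ∈ D1 := (Finset.mem_insert.mp hx).resolve_left hxu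
          have hy' : y ∈ D1 := (Finset.mem_insert.mp hy).resolve_left hyu
          rw [Function.update_of_ne hxu, Function.update_of_ne hyu]
          exact hh1 x hx' y hy' hxy
    · exact ⟨D, g, fun h => absurd h hPDg⟩
  choose Dn gn hkey using key
  set seq : ℕ → Finset V × (V → V) := fun n =>
    Nat.rec (S, f) (fun n p => (Dn p.1 p.2 (e n), gn p.1 p.2 (e n))) n with hseqdef
  have hseq : ∀ n, seq (n + 1) = (Dn (seq n).1 (seq n).2 (e n),
      gn (seq n).1 (seq n).2 (e n)) := fun n => rfl
  have hPn : ∀ n, P (seq n).1 (seq n).2 := by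
    intro n
    induction n with
    | zero => exact ⟨hinj, hhom⟩
    | succ n ih => exact (hkey (seq n).1 (seq n).2 (e n) ih).2.2.2.2
  have hstep : ∀ n, (seq n).1 ⊆ (seq (n + 1)).1 ∧ e n ∈ (seq (n + 1)).1 ∧
      (∃ x ∈ (seq (n + 1)).1, (seq (n + 1)).2 x = e n) ∧
      (∀ x ∈ (seq n).1, (seq (n + 1)).2 x = (seq n).2 x) :=
    fun n => (fun h => ⟨h.1, h.2.1, h.2.2.1, h.2.2.2.1⟩)
      (hkey (seq n).1 (seq n).2 (e n) (hPn n))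
  have hag : ∀ m n, m ≤ n → ∀ x ∈ (seq m).1, x ∈ (seq n).1 ∧
      (seq n).2 x = (seq m).2 x := by
    intro m n hmn
    induction n, hmn using Nat.le_induction with
    | base => exact fun x hx => ⟨hx, rfl⟩
    | succ n hmn ih =>
      intro x hx
      obtain ⟨hx', hgx⟩ := ih x hx
      exact ⟨(hstep n).1 hx', ((hstep n).2.2.2 x hx').trans hgx⟩
  set F : V → V := fun x => (seq (e.symm x + 1)).2 x with hFdef
  have hmemι : ∀ x : V, x ∈ (seq (e.symm x + 1)).1 := by
    intro x
    have := (hstep (e.symm x)).2.1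
    rwa [e.apply_symm_apply] at this
  have hFx : ∀ n, ∀ x ∈ (seq n).1, (seq n).2 x = F x := by
    intro n x hx
    have h1 := hag n (max n (e.symm x + 1)) (le_max_left _ _) x hx
    have h2 := hag (e.symm x + 1) (max n (e.symm x + 1)) (le_max_right _ _) x (hmemι x)
    rw [← h1.2, h2.2]
  refine ⟨F, ⟨⟨?_, ?_⟩, ?_⟩, ?_⟩
  · intro x y hxy
    set N := max (e.symm x + 1) (e.symm y + 1) with hN
    have hx := hag _ N (le_max_left _ _) x (hmemι x)
    have hy := hag _ N (le_max_right _ _) y (hmemι y)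
    refine (hPn N).1 (Finset.mem_coe.mpr hx.1) (Finset.mem_coe.mpr hy.1) ?_
    rw [hFx N x hx.1, hFx N y hy.1, hxy]
  · intro y
    obtain ⟨x, hx, hgx⟩ := (hstep (e.symm y)).2.2.1
    refine ⟨x, ?_⟩
    have hh := hFx (e.symm y + 1) x hx
    rw [← hh, hgx, e.apply_symm_apply]
  · intro u v huv
    set N := max (e.symm u + 1) (e.symm v + 1) with hN
    have hu := hag _ N (le_max_left _ _) u (hmemι u)
    have hv := hag _ N (le_max_right _ _) v (hmemι v)
    rw [← hFx N u hu.1, ← hFx N v hv.1]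
    exact (hPn N).2 u hu.1 v hv.1 huv
  · intro x hx
    have h0 : x ∈ (seq 0).1 := hx
    rw [← hFx 0 x h0]
    rfl
end

section
/- Let M be an IB-homogeneous relational structure (graph), A and B finite graphs in the age of M, and let i, i' : A → M and e, e' : B → M be embeddings. If a monomorphism f : A → B is represented in the bimorphism monoid of M over the pair (i, e), then it is also represented over the pair (i', e'). That is, representability of a monomorphism between members of the age depends only on the isomorphism types, not on the chosen embeddings. -/
lemma exists_bimorph_between {V α : Type*} [Fintype α] [Nonempty α]
    (M : SimpleGraph V) (hM : IBHom M) (A : SimpleGraph α) (j k : A ↪g M) :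
    ∃ G : V → V, IsBimorphism M G ∧ ∀ a : α, G (j a) = k a := by
  classical
  set S : Finset V := Finset.image j Finset.univ with hS
  set g : V → V := fun x => k (Function.invFun j x) with hg
  have hinv : ∀ a : α, Function.invFun j (j a) = a :=
    Function.leftInverse_invFun j.injective
  have hpi : IsPartialIso M S g := by
    constructor
    · intro x hx y hy hxy
      simp only [hS, Finset.coe_image, Set.mem_image] at hx hy
      obtain ⟨a, -, rfl⟩ := hx
      obtain ⟨b, -, rfl⟩ := hy
      simp only [hg, hinv] at hxy
      exact congrArg j (k.injective hxy)
    · intro u hu v hv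
      simp only [hS, Finset.mem_image] at hu hv
      obtain ⟨a, -, rfl⟩ := hu
      obtain ⟨b, -, rfl⟩ := hv
      simp only [hg, hinv]
      rw [j.map_adj_iff, k.map_adj_iff]
  obtain ⟨G, hG, hGS⟩ := hM S g hpi
  refine ⟨G, hG, fun a => ?_⟩
  have : j a ∈ S := by simp [hS]
  rw [hGS _ this, hg]
  simp [hinv]

/-- Representability of a monomorphism between members of the age of an IB-homogeneous
graph does not depend on the chosen embeddings. -/
theorem stmt15 {V α β : Type*} [Fintype α] [Fintype β] (M : SimpleGraph V) (hM : IBHom M)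
    (A : SimpleGraph α) (B : SimpleGraph β)
    (i i' : A ↪g M) (e e' : B ↪g M)
    (f : A →g B) (hf : Function.Injective f)
    (hrep : ∃ F : V → V, IsBimorphism M F ∧ ∀ a : α, F (i a) = e (f a)) :
    ∃ F : V → V, IsBimorphism M F ∧ ∀ a : α, F (i' a) = e' (f a) := by
  cases isEmpty_or_nonempty α with
  | inl h =>
      exact ⟨id, ⟨Function.bijective_id, fun u v h => h⟩, fun a => isEmptyElim a⟩
  | inr h =>
      have : Nonempty β := ⟨f (Classical.arbitrary α)⟩
      obtain ⟨G₁, hG₁, hG₁e⟩ := exists_bimorph_between M hM A i' i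
      obtain ⟨G₂, hG₂, hG₂e⟩ := exists_bimorph_between M hM B e e'
      obtain ⟨F, hF, hFe⟩ := hrep
      refine ⟨G₂ ∘ F ∘ G₁, ⟨hG₂.1.comp (hF.1.comp hG₁.1), fun u v huv =>
        hG₂.2 _ _ (hF.2 _ _ (hG₁.2 _ _ huv))⟩, fun a => ?_⟩
      simp only [Function.comp_apply, hG₁e, hFe, hG₂e]
end

section
/- Let G be an IB-homogeneous graph in which some bimorphism maps a nonedge to an edge, and let X be a finite subset of G that is not a clique. Then there exists a bimorphism F of G such that the induced subgraph on F(X) has strictly more edges than the induced subgraph on X, and |F(X)| = |X|. -/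
/-- In an IB-homogeneous graph representing `m`, any finite non-clique can be mapped by a
bimorphism to a set of the same size with strictly more edges. -/
theorem stmt16 {V : Type*} (G : SimpleGraph V) (hG : IBHom G) (hm : RepM G)
    (X : Finset V) (hX : ∃ x ∈ X, ∃ y ∈ X, x ≠ y ∧ ¬ G.Adj x y) :
    ∃ F : V → V, IsBimorphism G F ∧ (F '' ↑X).ncard = X.card ∧
      {p : V × V | p.1 ∈ X ∧ p.2 ∈ X ∧ G.Adj p.1 p.2}.ncard <
      {p : V × V | p.1 ∈ F '' ↑X ∧ p.2 ∈ F '' ↑X ∧ G.Adj p.1 p.2}.ncard := by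
  classical
  obtain ⟨x, hxX, y, hyX, hxy, hnadj⟩ := hX
  obtain ⟨F0, hF0, u, v, huv, hnuv, hadj⟩ := hm
  set f : V → V := fun z => if z = x then u else v with hf
  have hyx : y ≠ x := fun h => hxy h.symm
  have hfx : f x = u := by simp [hf]
  have hfy : f y = v := by simp [hf, hyx]
  have hmem : ∀ z ∈ ({x, y} : Finset V), z = x ∨ z = y := by
    intro z hz; simpa using hz
  have hpi : IsPartialIso G ({x, y} : Finset V) f := by
    constructor
    · intro a ha b hb hab
      rcases hmem a (by simpa using ha) with rfl | rfl <;>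
        rcases hmem b (by simpa using hb) with rfl | rfl <;>
        simp_all [hfx, hfy]
    · intro a ha b hb
      rcases hmem a ha with rfl | rfl <;> rcases hmem b hb with rfl | rfl
      · simp [hfx]
      · rw [hfx, hfy]; exact iff_of_false hnadj hnuv
      · rw [hfy, hfx]
        exact iff_of_false (fun h => hnadj h.symm) (fun h => hnuv h.symm)
      · simp [hfy]
  obtain ⟨H, hH, hHext⟩ := hG _ f hpi
  refine ⟨F0 ∘ H, ⟨hF0.1.comp hH.1, fun a b hab => hF0.2 _ _ (hH.2 _ _ hab)⟩, ?_, ?_⟩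
  · have hinj : Function.Injective (F0 ∘ H) := (hF0.1.comp hH.1).injective
    rw [Set.ncard_image_of_injective _ hinj, Set.ncard_coe_finset]
  · set F : V → V := F0 ∘ H with hFdef
    have hinj : Function.Injective F := (hF0.1.comp hH.1).injective
    have hFx : F x = F0 u := by simp [hFdef, hHext x (by simp), hfx]
    have hFy : F y = F0 v := by simp [hFdef, hHext y (by simp), hfy]
    have hFadj : G.Adj (F x) (F y) := by rw [hFx, hFy]; exact hadj
    set S1 : Set (V × V) := {p : V × V | p.1 ∈ X ∧ p.2 ∈ X ∧ G.Adj p.1 p.2}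
    set S2 : Set (V × V) := {p : V × V | p.1 ∈ F '' ↑X ∧ p.2 ∈ F '' ↑X ∧ G.Adj p.1 p.2}
    set g : V × V → V × V := fun p => (F p.1, F p.2) with hg
    have hginj : Function.Injective g := fun p q hpq => by
      simp only [hg, Prod.mk.injEq] at hpq
      exact Prod.ext (hinj hpq.1) (hinj hpq.2)
    have hsub : g '' S1 ⊆ S2 := by
      rintro _ ⟨p, ⟨hp1, hp2, hpadj⟩, rfl⟩
      exact ⟨⟨p.1, hp1, rfl⟩, ⟨p.2, hp2, rfl⟩, hF0.2 _ _ (hH.2 _ _ hpadj)⟩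
    have hmemS2 : (F x, F y) ∈ S2 := ⟨⟨x, hxX, rfl⟩, ⟨y, hyX, rfl⟩, hFadj⟩
    have hnmem : (F x, F y) ∉ g '' S1 := by
      rintro ⟨p, ⟨hp1, hp2, hpadj⟩, hpe⟩
      simp only [hg, Prod.mk.injEq] at hpe
      have : p.1 = x := hinj hpe.1
      have : p.2 = y := hinj hpe.2
      exact hnadj (by rwa [‹p.1 = x›, ‹p.2 = y›] at hpadj)
    have hS2fin : S2.Finite := by
      apply Set.Finite.subset (Set.Finite.prod (X.finite_toSet.image F) (X.finite_toSet.image F))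
      rintro p ⟨h1, h2, _⟩; exact ⟨h1, h2⟩
    have h1 : S1.ncard = (g '' S1).ncard := (Set.ncard_image_of_injective _ hginj).symm
    have h2 : (g '' S1).ncard < S2.ncard :=
      Set.ncard_lt_ncard ⟨hsub, fun hcon => hnmem (hcon hmemS2)⟩ hS2fin
    rw [h1]; exact h2
end

section
/- If G is a countable IB-homogeneous graph that represents m (some bimorphism maps a nonedge to an edge), then for every finite independent set A of G and every vertex set B of the same size, there is a bimorphism of G mapping A bijectively onto B. -/
section Aux
variable {V : Type*} (G : SimpleGraph V)

lemma bimorph_comp_s17 {F H : V → V} (hF : IsBimorphism G F) (hH : IsBimorphism G H) :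
    IsBimorphism G (H ∘ F) :=
  ⟨hH.1.comp hF.1, fun u v h => hH.2 _ _ (hF.2 _ _ h)⟩

lemma pull_edge (hG : IBHom G) (hm : RepM G) {u v : V} (h : G.Adj u v) :
    ∃ K x y, IsBimorphism G K ∧ x ≠ y ∧ ¬ G.Adj x y ∧ K x = u ∧ K y = v := by
  classical
  obtain ⟨F0, hF0, a, b, hab, hnadj, hadj⟩ := hm
  have hne : F0 a ≠ F0 b := hadj.ne
  set f : V → V := fun z => if z = F0 a then u else v with hfdef
  have hfa : f (F0 a) = u := if_pos rfl
  have hfb : f (F0 b) = v := if_neg hne.symm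
  have hmem : ∀ z, z ∈ ({F0 a, F0 b} : Finset V) → z = F0 a ∨ z = F0 b := by
    intro z hz; simpa using hz
  have hpi : IsPartialIso G {F0 a, F0 b} f := by
    constructor
    · intro p hp q hq hpq
      rcases hmem _ hp with rfl | rfl <;> rcases hmem _ hq with rfl | rfl
      · rfl
      · rw [hfa, hfb] at hpq; exact absurd hpq h.ne
      · rw [hfa, hfb] at hpq; exact absurd hpq.symm h.ne
      · rfl
    · intro p hp q hq
      rcases hmem _ hp with rfl | rfl <;> rcases hmem _ hq with rfl | rfl
      · simp [hfa]
      · rw [hfa, hfb]; exact iff_of_true hadj h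
      · rw [hfa, hfb]; exact iff_of_true hadj.symm h.symm
      · simp [hfb]
  obtain ⟨H, hH, hHext⟩ := hG _ _ hpi
  refine ⟨H ∘ F0, a, b, bimorph_comp_s17 G hF0 hH, hab, hnadj, ?_, ?_⟩
  · simp only [Function.comp_apply]
    rw [hHext _ (by simp), hfa]
  · simp only [Function.comp_apply]
    rw [hHext _ (by simp), hfb]

open scoped Classical in
/-- number of (ordered) edges inside a finset -/
noncomputable def ecount (B : Finset V) : ℕ :=
  ((B ×ˢ B).filter fun p => G.Adj p.1 p.2).card

lemma exists_indep_preimage (hG : IBHom G) (hm : RepM G) :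
    ∀ (n : ℕ) (B : Finset V), ecount G B ≤ n →
      ∃ (A' : Finset V) (F : V → V), IsBimorphism G F ∧ IsIndep G ↑A' ∧ F '' ↑A' = ↑B := by
  classical
  intro n
  induction n with
  | zero =>
    intro B hB
    refine ⟨B, id, ⟨Function.bijective_id, fun _ _ h => h⟩, ?_, by simp⟩
    intro p hp q hq hpq hadj
    have : ((B ×ˢ B).filter fun p => G.Adj p.1 p.2) = ∅ := by
      have := Nat.le_zero.mp hB
      exact Finset.card_eq_zero.mp (by simpa only [ecount] using this)
    have hmem : ((p, q) : V × V) ∈ (B ×ˢ B).filter fun p => G.Adj p.1 p.2 := by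
      simp only [Finset.mem_filter, Finset.mem_product]
      exact ⟨⟨Finset.mem_coe.mp hp, Finset.mem_coe.mp hq⟩, hadj⟩
    rw [this] at hmem
    simp at hmem
  | succ n ih =>
    intro B hB
    by_cases hind : IsIndep G ↑B
    · exact ⟨B, id, ⟨Function.bijective_id, fun _ _ h => h⟩, hind, by simp⟩
    · simp only [IsIndep, Set.Pairwise] at hind
      push_neg at hind
      obtain ⟨u, hu, v, hv, huv, hadj⟩ := hind
      obtain ⟨K, x, y, hK, hxy, hnadj, hKx, hKy⟩ := pull_edge G hG hm hadj
      have : Nonempty V := ⟨u⟩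
      have hKinj := hK.1.1
      have hKri : ∀ b, K (Function.invFun K b) = b :=
        Function.rightInverse_invFun hK.1.2
      have hKli : ∀ a, Function.invFun K (K a) = a :=
        Function.leftInverse_invFun hKinj
      set B' : Finset V := B.image (Function.invFun K) with hB'def
      have hmemB' : ∀ z, z ∈ B' ↔ K z ∈ B := by
        intro z
        simp only [hB'def, Finset.mem_image]
        constructor
        · rintro ⟨b, hb, rfl⟩; rwa [hKri]
        · intro hz; exact ⟨K z, hz, hKli z⟩
      -- edge count strictly decreases
      have hlt : ecount G B' < ecount G B := by
        have hsub : (((B' ×ˢ B').filter fun p => G.Adj p.1 p.2).image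
            fun p => (K p.1, K p.2)) ⊂ ((B ×ˢ B).filter fun p => G.Adj p.1 p.2) := by
          constructor
          · intro p hp
            simp only [Finset.mem_image, Finset.mem_filter, Finset.mem_product] at hp ⊢
            obtain ⟨⟨q1, q2⟩, ⟨⟨h1, h2⟩, h3⟩, rfl⟩ := hp
            exact ⟨⟨(hmemB' q1).mp h1, (hmemB' q2).mp h2⟩, hK.2 _ _ h3⟩
          · intro hall
            have huvmem : ((u, v) : V × V) ∈ ((B' ×ˢ B').filter fun p => G.Adj p.1 p.2).image
                fun p => (K p.1, K p.2) := by
              apply hall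
              exact Finset.mem_filter.mpr
                ⟨Finset.mem_product.mpr ⟨Finset.mem_coe.mp hu, Finset.mem_coe.mp hv⟩, hadj⟩
            simp only [Finset.mem_image, Finset.mem_filter, Finset.mem_product,
              Prod.mk.injEq] at huvmem
            obtain ⟨⟨q1, q2⟩, ⟨_, h3⟩, he1, he2⟩ := huvmem
            have hq1 : q1 = x := hKinj (by rw [he1, hKx])
            have hq2 : q2 = y := hKinj (by rw [he2, hKy])
            rw [hq1, hq2] at h3
            exact hnadj h3
        calc ecount G B' = (((B' ×ˢ B').filter fun p => G.Adj p.1 p.2).image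
              fun p => (K p.1, K p.2)).card := by
              rw [Finset.card_image_of_injOn]
              · simp [ecount]
              · intro p _ q _ hpq
                have h1 : K p.1 = K q.1 := congrArg Prod.fst hpq
                have h2 : K p.2 = K q.2 := congrArg Prod.snd hpq
                exact Prod.ext (hKinj h1) (hKinj h2)
          _ < _ := Finset.card_lt_card hsub
          _ = ecount G B := by simp [ecount]
      obtain ⟨A', F', hF', hA', himg⟩ := ih B' (by omega)
      refine ⟨A', K ∘ F', bimorph_comp_s17 G hF' hK, hA', ?_⟩
      rw [Set.image_comp, himg]
      have : (↑B' : Set V) = Function.invFun K '' ↑B := by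
        simp [hB'def]
      rw [this, Set.image_image]
      simp [hKri]

end Aux


/-- In a countable IB-homogeneous graph representing `m`, every finite independent set can
be mapped bijectively onto any vertex set of the same size by a bimorphism. -/
theorem stmt17 {V : Type*} [Countable V] (G : SimpleGraph V) (hG : IBHom G) (hm : RepM G)
    (A B : Finset V) (hA : IsIndep G ↑A) (hcard : A.card = B.card) :
    ∃ F : V → V, IsBimorphism G F ∧ F '' ↑A = ↑B := by
  classical
  obtain ⟨A', F', hF', hA', himg⟩ := exists_indep_preimage G hG hm (ecount G B) B le_rfl
  -- A'.card = B.card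
  have hAB' : A'.image F' = B := by
    apply Finset.coe_injective
    rw [Finset.coe_image, himg]
  have hcard' : A.card = A'.card := by
    rw [hcard, ← hAB', Finset.card_image_of_injective _ hF'.1.1]
  -- bijection from A to A'
  obtain ⟨e⟩ : Nonempty ((A : Set V) ≃ (A' : Set V)) := by
    have : Fintype.card (A : Set V) = Fintype.card (A' : Set V) := by
      simpa using hcard'
    exact ⟨Fintype.equivOfCardEq this⟩
  set f : V → V := fun z => if h : z ∈ A then (e ⟨z, h⟩ : V) else z with hfdef
  have hfmem : ∀ z (h : z ∈ A), f z = (e ⟨z, h⟩ : V) := fun z h => dif_pos h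
  have hfA' : ∀ z, z ∈ A → f z ∈ A' := by
    intro z hz; rw [hfmem z hz]; exact (e ⟨z, hz⟩).2
  have hfinj : Set.InjOn f ↑A := by
    intro p hp q hq hpq
    rw [hfmem p hp, hfmem q hq] at hpq
    have := e.injective (Subtype.ext hpq)
    exact Subtype.ext_iff.mp this
  have hpi : IsPartialIso G A f := by
    refine ⟨hfinj, ?_⟩
    intro p hp q hq
    by_cases hpq : p = q
    · subst hpq; simp
    · constructor
      · intro had; exact absurd had (hA hp hq hpq)
      · intro had
        exact absurd had (hA' (hfA' p hp) (hfA' q hq) fun hcon => hpq (hfinj hp hq hcon))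
  obtain ⟨F2, hF2, hF2ext⟩ := hG A f hpi
  refine ⟨F' ∘ F2, bimorph_comp_s17 G hF2 hF', ?_⟩
  rw [Set.image_comp]
  have h1 : F2 '' ↑A = ↑A' := by
    have h2 : F2 '' ↑A = f '' ↑A := by
      apply Set.image_congr
      intro z hz; exact hF2ext z hz
    rw [h2]
    apply Set.eq_of_subset_of_ncard_le
    · rintro _ ⟨z, hz, rfl⟩; exact hfA' z hz
    · rw [Set.ncard_image_of_injOn hfinj]
      simp [hcard']
    · exact A'.finite_toSet
  rw [h1, himg]
end
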